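/- arXiv:1201.4762 — 3 statements merged into one kernel-verified Lean document; each statement's English description precedes it below -/
import Mathlib

section
/- Let F be a field and ζ₁,...,ζ₅ ∈ F pairwise distinct, with ζ_{ij} := ζ_i − ζ_j. For the single 4-simplex 12345, define for each tetrahedron face ijkl (i<j<k<l) and each vertex p ∈ {i,j,k,l} the coordinate y_{ijkl,p} of f₃ applied to a triangle-vector as in the paper; then the coefficients (ζ_{jk}/ζ_{ik})·ζ_{ij}⁻¹-type combinations arising from f₂ followed by f₃ vanish. Concretely: for any y₁,...,y₅ ∈ F, defining y_{s,i} = (ζ_{ij}⁻¹ − ζ_{ik}⁻¹)y_i − ζ_{ij}⁻¹ y_j + ζ_{ik}⁻¹ y_k for each triangle s = {i,j,k} (with j,k the other two vertices of s ordered so that ijk is an even permutation of the increasing order), and y_{t,i} = Σ_{s ⊂ t, s ∋ i} ε_s^{(t)} y_{s,i} for each tetrahedron t (where ε_s^{(t)} = ±1 is the sign of s in the simplicial boundary of t), one has y_{t,i} = 0 for every tetrahedron t ⊂ {1,...,5} and every vertex i ∈ t. -/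
/-- The sign `ε` of the face obtained by deleting vertex `m` from simplex `t`:
`(-1)^(position of m in the increasing ordering of t)` (0-based). -/
def bsign {n : ℕ} (F : Type*) [Field F] (t : Finset (Fin n)) (m : Fin n) : F :=
  (-1 : F) ^ (t.filter (· < m)).card

/-- Coordinates `y_{s,i}` of the image of `f₂`: for a triangle `s = {i,j,k}` (with `j,k`
the other two vertices of `s`, ordered so that `ijk` is an even permutation of the
increasing order of `s`), `y_{s,i} = (ζ_{ij}⁻¹ − ζ_{ik}⁻¹) y_i − ζ_{ij}⁻¹ y_j + ζ_{ik}⁻¹ y_k`. -/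
def f2coord (F : Type*) [Field F] [DecidableEq F] (ζ : Fin 5 → F) (y : Fin 5 → F)
    (s : Finset (Fin 5)) (i : Fin 5) : F :=
  -- the two other vertices of `s`, in increasing order
  let rest := s.erase i
  let p : Fin 5 := WithTop.untopD 0 rest.min
  let q : Fin 5 := WithBot.unbotD 0 rest.max
  -- cyclic ordering: if `i` is the middle vertex of `s`, swap them
  let j : Fin 5 := if (s.filter (· < i)).card = 1 then q else p
  let k : Fin 5 := if (s.filter (· < i)).card = 1 then p else q
  ((ζ i - ζ j)⁻¹ - (ζ i - ζ k)⁻¹) * y i - (ζ i - ζ j)⁻¹ * y j + (ζ i - ζ k)⁻¹ * y k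

set_option maxHeartbeats 4000000 in
/-- For the single 4-simplex `12345` (vertices `Fin 5`), the composite `f₃ ∘ f₂`
vanishes: for every tetrahedron `t ⊂ {1,…,5}` and vertex `i ∈ t`, the coordinate
`y_{t,i} = Σ_{s ⊂ t, s ∋ i} ε_s^{(t)} y_{s,i}` is zero, where `y_{s,i}` comes from an
arbitrary vertex vector `y` via `f₂`. -/
theorem f3_comp_f2_eq_zero (F : Type*) [Field F] [DecidableEq F] (ζ : Fin 5 → F)
    (hζ : Function.Injective ζ) (y : Fin 5 → F)
    (t : Finset (Fin 5)) (ht : t.card = 4) (i : Fin 5) (hi : i ∈ t) :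
    ∑ m ∈ t.erase i, bsign F t m * f2coord F ζ y (t.erase m) i = 0 := by
  have hd : ∀ a b : Fin 5, a ≠ b → ζ a - ζ b ≠ 0 := fun a b h => sub_ne_zero.mpr (fun e => h (hζ e))
  have h1 : ∀ a b : Fin 5, WithTop.untopD 0 ({a,b}:Finset (Fin 5)).min = min a b := by decide
  have h2 : ∀ a b : Fin 5, WithBot.unbotD 0 ({a,b}:Finset (Fin 5)).max = max a b := by decide
  have hc : (Finset.univ \ t).card = 1 := by
    rw [Finset.card_sdiff_of_subset (Finset.subset_univ t)]; simp [ht]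
  obtain ⟨m, hm⟩ := Finset.card_eq_one.mp hc
  have htm : t = Finset.univ.erase m := by
    rw [Finset.erase_eq, ← hm]; simp
  subst htm
  fin_cases m <;> beta_reduce at hi ⊢ <;>
    [rw [show Finset.univ.erase (⟨0, by omega⟩ : Fin 5) = {1,2,3,4} from by decide] at hi ⊢;
     rw [show Finset.univ.erase (⟨1, by omega⟩ : Fin 5) = {0,2,3,4} from by decide] at hi ⊢;
     rw [show Finset.univ.erase (⟨2, by omega⟩ : Fin 5) = {0,1,3,4} from by decide] at hi ⊢;
     rw [show Finset.univ.erase (⟨3, by omega⟩ : Fin 5) = {0,1,2,4} from by decide] at hi ⊢;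
     rw [show Finset.univ.erase (⟨4, by omega⟩ : Fin 5) = {0,1,2,3} from by decide] at hi ⊢] <;>
  fin_cases i <;> first
  | exact absurd hi (by decide)
  | (simp [bsign, f2coord, Finset.erase_insert_of_ne, Finset.erase_insert,
      Finset.filter_insert, Finset.sum_insert, Finset.mem_insert, Finset.mem_singleton,
      Finset.sum_singleton, Finset.filter_singleton, Finset.erase_singleton, h1, h2] <;>
     field_simp <;>
     ring)
end

section
/- With notation as in the definition of the 4-simplex Grassmann weight: for any five elements v₁,...,v₅ of degree 1 in an exterior algebra over a field F satisfying Σ_{j=1}^{5} v_j = 0 and Σ_{j=1}^{5} ζ_j v_j = 0 with ζ₁,...,ζ₅ ∈ F pairwise distinct, and for any two choices of 3-element subsets {i,j,k} and {i',j',k'} of {1,...,5} with complements {l,m} and {l',m'} (each written in increasing order), one has sgn(ijklm)·(1/ζ_{lm})·v_i∧v_j∧v_k = sgn(i'j'k'l'm')·(1/ζ_{l'm'})·v_{i'}∧v_{j'}∧v_{k'}, where sgn denotes the sign of the permutation relative to 12345 and ζ_{lm} = ζ_l − ζ_m. -/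
open ExteriorAlgebra

section Aux

variable {F : Type*} [Field F] {V : Type*} [AddCommGroup V] [Module F V]

private lemma ee_anticomm (x y : V) : ι F x * ι F y = -(ι F y * ι F x) :=
  eq_neg_of_add_eq_zero_left (ι_add_mul_swap x y)

private lemma ee_triple (x y : V) : ι F x * ι F y * ι F x = 0 := by
  rw [ee_anticomm x y, neg_mul, mul_assoc, ι_sq_zero, mul_zero, neg_zero]

/-- The normalized triple product attached to a permutation. -/
private noncomputable def gw (ζ : Fin 5 → F) (v : Fin 5 → V) (σ : Equiv.Perm (Fin 5)) :
    ExteriorAlgebra F V :=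
  ((Equiv.Perm.sign σ : ℤ) : F) •
    (ζ (σ 3) - ζ (σ 4))⁻¹ • (ι F (v (σ 0)) * ι F (v (σ 1)) * ι F (v (σ 2)))

variable {ζ : Fin 5 → F} {v : Fin 5 → V}

private lemma rel (hsum : ∑ j, v j = 0) (hzsum : ∑ j, ζ j • v j = 0)
    (e : Equiv.Perm (Fin 5)) :
    (ζ (e 2) - ζ (e 4)) • (ι F (v (e 0)) * ι F (v (e 1)) * ι F (v (e 2)))
      = (ζ (e 4) - ζ (e 3)) • (ι F (v (e 0)) * ι F (v (e 1)) * ι F (v (e 3))) := by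
  set c := ζ (e 4) with hc
  have h0 : ∑ t, (ζ t - c) • v t = 0 := by
    calc ∑ t, (ζ t - c) • v t = ∑ t, (ζ t • v t - c • v t) := by simp [sub_smul]
      _ = (∑ t, ζ t • v t) - c • (∑ t, v t) := by
          rw [Finset.sum_sub_distrib, Finset.smul_sum]
      _ = 0 := by rw [hsum, hzsum, smul_zero, sub_zero]
  have h1 : ∑ t, (ζ t - c) • (ι F (v (e 0)) * ι F (v (e 1)) * ι F (v t))
      = (0 : ExteriorAlgebra F V) := by
    have key : ι F (∑ t, (ζ t - c) • v t)
        = ∑ t, (ζ t - c) • (ι F (v t) : ExteriorAlgebra F V) := by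
      rw [map_sum (ι F) _ Finset.univ]
      exact Finset.sum_congr rfl fun t _ => map_smul _ _ _
    calc ∑ t, (ζ t - c) • (ι F (v (e 0)) * ι F (v (e 1)) * ι F (v t))
        = ι F (v (e 0)) * ι F (v (e 1)) * ι F (∑ t, (ζ t - c) • v t) := by
          rw [key, Finset.mul_sum]
          exact Finset.sum_congr rfl fun t _ => (mul_smul_comm _ _ _).symm
      _ = 0 := by rw [h0, map_zero (ι F : V →ₗ[F] ExteriorAlgebra F V), mul_zero]
  have h2 := (Equiv.sum_comp e
    fun t => (ζ t - c) • (ι F (v (e 0)) * ι F (v (e 1)) * ι F (v t))).trans h1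
  rw [Fin.sum_univ_five] at h2
  have z0 : ι F (v (e 0)) * ι F (v (e 1)) * ι F (v (e 0)) = 0 := ee_triple _ _
  have z1 : ι F (v (e 0)) * ι F (v (e 1)) * ι F (v (e 1)) = 0 := by
    rw [mul_assoc, ι_sq_zero, mul_zero]
  rw [z0, z1, smul_zero, smul_zero, ← hc, sub_self, zero_smul, zero_add, zero_add,
    add_zero] at h2
  rw [eq_neg_of_add_eq_zero_left h2, ← neg_smul, neg_sub]


private lemma hzne (hζ : Function.Injective ζ) (σ : Equiv.Perm (Fin 5)) {a b : Fin 5} (hab : a ≠ b) :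
    ζ (σ a) - ζ (σ b) ≠ 0 :=
  sub_ne_zero.mpr fun h => hab (σ.injective (hζ h))

private lemma gw_swap_01 (σ : Equiv.Perm (Fin 5)) :
    gw ζ v (σ * Equiv.swap (0 : Fin 5) 1) = gw ζ v σ := by
  unfold gw
  have hs : ((Equiv.Perm.sign (σ * Equiv.swap (0:Fin 5) 1) : ℤ) : F)
      = -((Equiv.Perm.sign σ : ℤ) : F) := by
    rw [Equiv.Perm.sign_mul, Equiv.Perm.sign_swap (by decide : (0:Fin 5) ≠ 1)]
    push_cast [Units.val_mul]; ring
  rw [hs]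
  simp only [Equiv.Perm.mul_apply,
    show Equiv.swap (0:Fin 5) 1 0 = 1 from by decide,
    show Equiv.swap (0:Fin 5) 1 1 = 0 from by decide,
    show Equiv.swap (0:Fin 5) 1 2 = 2 from by decide,
    show Equiv.swap (0:Fin 5) 1 3 = 3 from by decide,
    show Equiv.swap (0:Fin 5) 1 4 = 4 from by decide]
  rw [ee_anticomm (v (σ 1)) (v (σ 0)), neg_mul]
  module

private lemma gw_swap_12 (σ : Equiv.Perm (Fin 5)) :
    gw ζ v (σ * Equiv.swap (1 : Fin 5) 2) = gw ζ v σ := by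
  unfold gw
  have hs : ((Equiv.Perm.sign (σ * Equiv.swap (1:Fin 5) 2) : ℤ) : F)
      = -((Equiv.Perm.sign σ : ℤ) : F) := by
    rw [Equiv.Perm.sign_mul, Equiv.Perm.sign_swap (by decide : (1:Fin 5) ≠ 2)]
    push_cast [Units.val_mul]; ring
  rw [hs]
  simp only [Equiv.Perm.mul_apply,
    show Equiv.swap (1:Fin 5) 2 0 = 0 from by decide,
    show Equiv.swap (1:Fin 5) 2 1 = 2 from by decide,
    show Equiv.swap (1:Fin 5) 2 2 = 1 from by decide,
    show Equiv.swap (1:Fin 5) 2 3 = 3 from by decide,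
    show Equiv.swap (1:Fin 5) 2 4 = 4 from by decide]
  rw [mul_assoc, ee_anticomm (v (σ 2)) (v (σ 1)), mul_neg, ← mul_assoc]
  module

private lemma gw_swap_34 (σ : Equiv.Perm (Fin 5)) :
    gw ζ v (σ * Equiv.swap (3 : Fin 5) 4) = gw ζ v σ := by
  unfold gw
  have hs : ((Equiv.Perm.sign (σ * Equiv.swap (3:Fin 5) 4) : ℤ) : F)
      = -((Equiv.Perm.sign σ : ℤ) : F) := by
    rw [Equiv.Perm.sign_mul, Equiv.Perm.sign_swap (by decide : (3:Fin 5) ≠ 4)]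
    push_cast [Units.val_mul]; ring
  rw [hs]
  simp only [Equiv.Perm.mul_apply,
    show Equiv.swap (3:Fin 5) 4 0 = 0 from by decide,
    show Equiv.swap (3:Fin 5) 4 1 = 1 from by decide,
    show Equiv.swap (3:Fin 5) 4 2 = 2 from by decide,
    show Equiv.swap (3:Fin 5) 4 3 = 4 from by decide,
    show Equiv.swap (3:Fin 5) 4 4 = 3 from by decide]
  rw [show (ζ (σ 4) - ζ (σ 3))⁻¹ = -(ζ (σ 3) - ζ (σ 4))⁻¹ from by
    rw [← inv_neg, neg_sub]]
  module

private lemma gw_swap_23 (hζ : Function.Injective ζ) (hsum : ∑ j, v j = 0) (hzsum : ∑ j, ζ j • v j = 0)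
    (σ : Equiv.Perm (Fin 5)) :
    gw ζ v (σ * Equiv.swap (2 : Fin 5) 3) = gw ζ v σ := by
  unfold gw
  have hs : ((Equiv.Perm.sign (σ * Equiv.swap (2:Fin 5) 3) : ℤ) : F)
      = -((Equiv.Perm.sign σ : ℤ) : F) := by
    rw [Equiv.Perm.sign_mul, Equiv.Perm.sign_swap (by decide : (2:Fin 5) ≠ 3)]
    push_cast [Units.val_mul]; ring
  rw [hs]
  simp only [Equiv.Perm.mul_apply,
    show Equiv.swap (2:Fin 5) 3 0 = 0 from by decide,
    show Equiv.swap (2:Fin 5) 3 1 = 1 from by decide,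
    show Equiv.swap (2:Fin 5) 3 2 = 3 from by decide,
    show Equiv.swap (2:Fin 5) 3 3 = 2 from by decide,
    show Equiv.swap (2:Fin 5) 3 4 = 4 from by decide]
  have ha : ζ (σ 2) - ζ (σ 4) ≠ 0 := hzne hζ σ (by decide)
  have hb : ζ (σ 4) - ζ (σ 3) ≠ 0 := hzne hζ σ (by decide)
  have h := rel hsum hzsum σ
  have hY : ι F (v (σ 0)) * ι F (v (σ 1)) * ι F (v (σ 3))
      = ((ζ (σ 4) - ζ (σ 3))⁻¹ * (ζ (σ 2) - ζ (σ 4))) •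
        (ι F (v (σ 0)) * ι F (v (σ 1)) * ι F (v (σ 2))) := by
    rw [mul_smul, h, smul_smul, inv_mul_cancel₀ hb, one_smul]
  have hc : ζ (σ 3) - ζ (σ 4) ≠ 0 := hzne hζ σ (by decide)
  rw [hY]
  simp only [smul_smul]
  congr 1
  field_simp
  ring

private lemma gw_mul_right (hζ : Function.Injective ζ) (hsum : ∑ j, v j = 0)
    (hzsum : ∑ j, ζ j • v j = 0) (τ σ : Equiv.Perm (Fin 5)) :
    gw ζ v (σ * τ) = gw ζ v σ := by
  have hτ : τ ∈ Submonoid.closure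
      (Set.range fun i : Fin 4 => Equiv.swap (Fin.castSucc i) (Fin.succ i)) := by
    rw [Equiv.Perm.mclosure_swap_castSucc_succ]; trivial
  revert σ
  refine Submonoid.closure_induction
    (motive := fun τ _ => ∀ σ, gw ζ v (σ * τ) = gw ζ v σ) ?_ ?_ ?_ hτ
  · rintro g ⟨i, rfl⟩ σ
    fin_cases i
    · exact gw_swap_01 σ
    · exact gw_swap_12 σ
    · exact gw_swap_23 hζ hsum hzsum σ
    · exact gw_swap_34 σ
  · intro σ; rw [mul_one]
  · intro a b _ _ ha hb σ
    rw [← mul_assoc, hb, ha]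

end Aux

/-- Abstract form of Remark 3: if five degree-1 elements `v₁,…,v₅` of an exterior algebra
satisfy `Σ v_j = 0` and `Σ ζ_j v_j = 0` with `ζ₁,…,ζ₅` pairwise distinct, then for any two
increasing triples `{i,j,k}`, `{i',j',k'} ⊂ {1,…,5}` with increasingly-ordered complements
`{l,m}`, `{l',m'}`, one has
`sgn(ijklm)·(1/ζ_{lm})·vᵢ∧vⱼ∧v_k = sgn(i'j'k'l'm')·(1/ζ_{l'm'})·v_{i'}∧v_{j'}∧v_{k'}`.
A triple together with its complement is encoded as a permutation `σ` of `Fin 5`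
(`i = σ 0, j = σ 1, k = σ 2, l = σ 3, m = σ 4`) with `σ 0 < σ 1 < σ 2` and `σ 3 < σ 4`. -/
theorem triple_products_agree (F : Type*) [Field F] (hchar : (2 : F) ≠ 0)
    (ζ : Fin 5 → F) (hζ : Function.Injective ζ)
    (V : Type*) [AddCommGroup V] [Module F V] (v : Fin 5 → V)
    (hsum : ∑ j, v j = 0) (hzsum : ∑ j, ζ j • v j = 0)
    (σ σ' : Equiv.Perm (Fin 5))
    (hσ : σ 0 < σ 1 ∧ σ 1 < σ 2 ∧ σ 3 < σ 4)
    (hσ' : σ' 0 < σ' 1 ∧ σ' 1 < σ' 2 ∧ σ' 3 < σ' 4) :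
    ((Equiv.Perm.sign σ : ℤ) : F) •
        (ζ (σ 3) - ζ (σ 4))⁻¹ •
          (ι F (v (σ 0)) * ι F (v (σ 1)) * ι F (v (σ 2)))
      = ((Equiv.Perm.sign σ' : ℤ) : F) •
          (ζ (σ' 3) - ζ (σ' 4))⁻¹ •
            (ι F (v (σ' 0)) * ι F (v (σ' 1)) * ι F (v (σ' 2))) := by
  have key : ∀ τ : Equiv.Perm (Fin 5), gw ζ v τ = gw ζ v 1 := fun τ => by
    simpa using gw_mul_right hζ hsum hzsum τ 1
  show gw ζ v σ = gw ζ v σ'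
  rw [key σ, key σ']
end

section
/- Let F be a field with pairwise distinct ζ₁,...,ζ₅ and consider a single inner vertex i = 1 contained in tetrahedra t among the 4-element subsets of {1,...,5} containing 1. Define g₂(e₁) = Σ_{t ∋ 1} (ζ_{1j}ζ_{1k}ζ_{1l})⁻¹ e_t, where {j,k,l} = t \ {1}, and define g₃(e_t) for a tetrahedron t shared by the two 4-simplices obtained by adjoining one of the two remaining vertices, as e_{u,m} for the vertex m ∉ t of each such 4-simplex u. Then g₃(g₂(e₁)) = 0 in ⊕_u E_u, whenever every tetrahedron containing vertex 1 is inner (i.e., shared by exactly two of the 4-simplices of the star of 1). -/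
noncomputable section

variable (F : Type*) [Field F] (ζ : Fin 6 → F)

/-- Indicator function of a 4-simplex `u` (coefficient vectors in `E_u` are functions
`Fin 6 → F` supported on `u`, and `E_u` is the quotient by the span of the indicator of
`u` and its `ζ`-weighted version). -/
def ind (u : Finset (Fin 6)) : Fin 6 → F := fun p => if p ∈ u then 1 else 0

/-- The coefficient vector of `g₃(g₂(e₁))` in the summand `E_u` for the 4-simplex
`u = {1,…,6} \ {m}` of the star of the inner vertex `1` (0-indexed: vertex `0`) inside the
boundary of the 5-simplex on `{1,…,6}`: for each tetrahedron `t = u.erase m'` containing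
`0`, the contribution is `(ζ_{0j}ζ_{0k}ζ_{0l})⁻¹ e_{u,m'}` where `{j,k,l} = t \ {0}`. -/
def g3g2coeff (u : Finset (Fin 6)) : Fin 6 → F := fun m' =>
  if m' ∈ u ∧ m' ≠ 0 then (∏ p ∈ (u.erase m').erase 0, (ζ 0 - ζ p))⁻¹ else 0

/-- `g₃(g₂(e₁)) = 0` in `⊕_u E_u`: in the star of the inner vertex `1` (vertex `0` of
`Fin 6`) in the boundary of the 5-simplex — where every tetrahedron containing `1` is
inner, shared by exactly two of the five 4-simplices `u = {1,…,6} \ {m}`, `m ≠ 1` — the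
total coefficient vector in each `E_u` lies in the span of the two defining relations,
i.e. represents `0` in the quotient `E_u`. -/
theorem g3_g2_eq_zero (hζ : Function.Injective ζ) (m : Fin 6) (hm : m ≠ 0) :
    g3g2coeff F ζ (Finset.univ.erase m) ∈
      Submodule.span F
        {ind F (Finset.univ.erase m),
         fun p => ζ p * ind F (Finset.univ.erase m) p} := by
  set u := Finset.univ.erase m with hu
  set P := ∏ p ∈ u.erase 0, (ζ 0 - ζ p) with hP
  have hPne : P ≠ 0 :=
    Finset.prod_ne_zero_iff.mpr fun p hp =>
      sub_ne_zero.mpr fun h => (Finset.mem_erase.mp hp).1 (hζ h).symm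
  rw [Submodule.mem_span_pair]
  refine ⟨ζ 0 * P⁻¹, -P⁻¹, ?_⟩
  funext q
  simp only [Pi.add_apply, Pi.smul_apply, smul_eq_mul, g3g2coeff, ind]
  by_cases hq : q ∈ u
  · by_cases hq0 : q = 0
    · subst hq0; simp [hq]; ring
    · simp only [hq, hq0, if_true, and_true, ne_eq, not_false_eq_true, if_pos, mul_one]
      have hquE : q ∈ u.erase 0 := Finset.mem_erase.mpr ⟨hq0, hq⟩
      have hsplit : P = (ζ 0 - ζ q) * ∏ p ∈ (u.erase 0).erase q, (ζ 0 - ζ p) :=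
        (Finset.mul_prod_erase _ _ hquE).symm
      have hcomm : (u.erase q).erase 0 = (u.erase 0).erase q := Finset.erase_right_comm
      have hζq : ζ 0 - ζ q ≠ 0 := sub_ne_zero.mpr fun h => hq0 (hζ h).symm
      have hQne : (∏ p ∈ (u.erase 0).erase q, (ζ 0 - ζ p)) ≠ 0 := by
        intro h; exact hPne (by rw [hsplit, h, mul_zero])
      rw [hcomm, hsplit]
      rw [mul_inv]
      field_simp
      ring
  · simp [hq]

end
end
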